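/- For a finite simplicial complex K admitting a discrete Morse matching with c_i critical cells in dimension i, the i-th Betti number of K over any field F satisfies β_i(K; F) ≤ c_i (the discrete Morse inequalities). -/

import Mathlib

open Finset
set_option linter.unusedSectionVars false

variable {V : Type*} [LinearOrder V]


/-- A (finite abstract) simplicial complex, given by its finset of faces:
all faces are nonempty and the collection is closed under nonempty subsets. -/
def IsComplex (S : Finset (Finset V)) : Prop :=
  ∀ F ∈ S, F.Nonempty ∧ ∀ G ⊆ F, G.Nonempty → G ∈ S

/-- `σ` is a free face of `S`: it is properly contained in exactly one face `τ`,
which is moreover a facet. -/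
def IsFreePair (S : Finset (Finset V)) (σ τ : Finset V) : Prop :=
  σ ∈ S ∧ τ ∈ S ∧ σ ⊂ τ ∧ (∀ ρ ∈ S, σ ⊂ ρ → ρ = τ) ∧ ∀ ρ ∈ S, ¬ τ ⊂ ρ

/-- `Collapses S T`: `S` reduces to `T` by a finite sequence of elementary collapses,
each removing a free face together with the unique facet containing it. -/
inductive Collapses : Finset (Finset V) → Finset (Finset V) → Prop
  | refl (S : Finset (Finset V)) : Collapses S S
  | step {S T : Finset (Finset V)} (σ τ : Finset V) :
      IsFreePair S σ τ → Collapses (S \ {σ, τ}) T → Collapses S T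

/-- A complex is collapsible if it collapses to a single vertex. -/
def Collapsible (S : Finset (Finset V)) : Prop :=
  ∃ v : V, Collapses S {({v} : Finset V)}

/-- A discrete Morse matching: an acyclic partial matching on the Hasse diagram
of `S`, pairing faces whose dimensions differ by one. -/
structure MorseMatching (S : Finset (Finset V)) where
  M : Finset (Finset V × Finset V)
  mem_left : ∀ p ∈ M, p.1 ∈ S
  mem_right : ∀ p ∈ M, p.2 ∈ S
  cover : ∀ p ∈ M, p.1 ⊂ p.2 ∧ p.2.card = p.1.card + 1
  matching : ∀ p ∈ M, ∀ q ∈ M, p ≠ q →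
    p.1 ≠ q.1 ∧ p.2 ≠ q.2 ∧ p.1 ≠ q.2 ∧ p.2 ≠ q.1
  /-- The modified Hasse diagram (matched pairs pointing up, unmatched cover
  relations pointing down) has no directed cycle. -/
  acyclic : ∀ σ : Finset V, ¬ Relation.TransGen
      (fun x y => (x, y) ∈ M ∨
        ((y, x) ∉ M ∧ y ⊂ x ∧ x.card = y.card + 1 ∧ x ∈ S ∧ y ∈ S)) σ σ

/-- A face is critical for a matching if it is unmatched. -/
def MorseMatching.Critical {S : Finset (Finset V)} (mm : MorseMatching S)
    (F : Finset V) : Prop :=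
  F ∈ S ∧ ∀ p ∈ mm.M, p.1 ≠ F ∧ p.2 ≠ F

open scoped Classical in
/-- The finset of critical (unmatched) cells of a matching. -/
noncomputable def MorseMatching.criticalCells {S : Finset (Finset V)}
    (mm : MorseMatching S) : Finset (Finset V) :=
  S.filter fun F => ∀ p ∈ mm.M, p.1 ≠ F ∧ p.2 ≠ F

open scoped Classical in
/-- `c_i`: the number of critical `i`-dimensional cells. -/
noncomputable def MorseMatching.critCount {S : Finset (Finset V)}
    (mm : MorseMatching S) (i : ℕ) : ℕ :=
  (mm.criticalCells.filter fun F => F.card = i + 1).card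

/-- Incidence coefficient between faces: `±1` if `G` is obtained from `F` by
removing one vertex (with the alternating sign from the vertex ordering), else `0`. -/
def inc (R : Type) [CommRing R] (F G : Finset V) : R :=
  ∑ v ∈ F, if G = F.erase v then (-1 : R) ^ ((F.filter fun u => u < v).card) else 0

/-- The `R`-module of simplicial `n`-chains of `S`: the free module on the
`n`-dimensional faces of `S`. -/
abbrev Chains (R : Type) [CommRing R] (S : Finset (Finset V)) (n : ℕ) : Type _ :=
  {F : Finset V // F ∈ S ∧ F.card = n + 1} → R

/-- The simplicial boundary map `∂_{n+1} : C_{n+1}(S;R) → C_n(S;R)`. -/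
noncomputable def bdry (R : Type) [CommRing R] (S : Finset (Finset V)) (n : ℕ) :
    Chains R S (n + 1) →ₗ[R] Chains R S n where
  toFun c := fun G => ∑ F ∈ (S.filter fun F => F.card = n + 2).attach,
    inc R F.val G.val *
      c ⟨F.val, (Finset.mem_filter.mp F.prop).1, (Finset.mem_filter.mp F.prop).2⟩
  map_add' x y := by
    funext G
    simp [mul_add, Finset.sum_add_distrib]
  map_smul' r x := by
    funext G
    simp only [Pi.smul_apply, smul_eq_mul, RingHom.id_apply, Finset.mul_sum]
    exact Finset.sum_congr rfl fun i _ => by ring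

/-- The augmentation `C_0(S;R) → R`, sending every vertex to `1`. -/
noncomputable def aug (R : Type) [CommRing R] (S : Finset (Finset V)) :
    Chains R S 0 →ₗ[R] R where
  toFun c := ∑ F ∈ (S.filter fun F => F.card = 1).attach,
    c ⟨F.val, (Finset.mem_filter.mp F.prop).1, (Finset.mem_filter.mp F.prop).2⟩
  map_add' x y := by simp [Finset.sum_add_distrib]
  map_smul' r x := by simp [Finset.mul_sum]

/-- The `i`-th Betti number of `S` over a field `F`: the dimension of the
`i`-th simplicial homology `ker ∂_i / im ∂_{i+1}` with coefficients in `F`. -/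
noncomputable def betti (F : Type) [Field F] (S : Finset (Finset V)) : ℕ → ℕ
  | 0 => Module.finrank F (Chains F S 0 ⧸ LinearMap.range (bdry F S 0))
  | (n + 1) => Module.finrank F
      (LinearMap.ker (bdry F S n) ⧸
        Submodule.comap (LinearMap.ker (bdry F S n)).subtype
          (LinearMap.range (bdry F S (n + 1))))

section Aux
open Finset
variable {R : Type} [CommRing R] {S : Finset (Finset V)}

lemma inc_erase {F : Finset V} {v : V} (hv : v ∈ F) :
    inc R F (F.erase v) = (-1 : R) ^ ((F.filter fun u => u < v).card) := by
  unfold inc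
  rw [Finset.sum_eq_single v]
  · simp
  · intro u hu hne
    exact if_neg fun h => hne (Finset.erase_injOn F hu hv h.symm)
  · intro h; exact absurd hv h

lemma exists_of_inc_ne_zero {F G : Finset V} (h : inc R F G ≠ 0) :
    ∃ v ∈ F, G = F.erase v := by
  by_contra hc
  push_neg at hc
  exact h (Finset.sum_eq_zero fun v hv => if_neg (hc v hv))

lemma eq_erase_of_ssubset_card {σ τ : Finset V} (hsub : σ ⊂ τ)
    (hcard : τ.card = σ.card + 1) : ∃ v ∈ τ, v ∉ σ ∧ σ = τ.erase v := by
  have h1 : (τ \ σ).card = 1 := by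
    rw [Finset.card_sdiff_of_subset hsub.subset, hcard]; omega
  obtain ⟨v, hv⟩ := Finset.card_eq_one.1 h1
  have hvτ : v ∈ τ ∧ v ∉ σ := Finset.mem_sdiff.1 (hv ▸ Finset.mem_singleton_self v)
  refine ⟨v, hvτ.1, hvτ.2, Finset.eq_of_subset_of_card_le ?_ ?_⟩
  · intro x hx
    exact Finset.mem_erase.2 ⟨fun hxv => hvτ.2 (hxv ▸ hx), hsub.subset hx⟩
  · rw [Finset.card_erase_of_mem hvτ.1, hcard]; omega

/-- The sign-cancellation identity giving `∂∘∂ = 0`. -/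
lemma sign_cancel {E : Finset V} {v w : V} (hv : v ∈ E) (hw : w ∈ E) (hvw : w < v) :
    (-1 : R) ^ (((E.erase v).filter fun u => u < w).card) *
      (-1 : R) ^ ((E.filter fun u => u < v).card) +
    (-1 : R) ^ (((E.erase w).filter fun u => u < v).card) *
      (-1 : R) ^ ((E.filter fun u => u < w).card) = 0 := by
  have h1 : ((E.erase v).filter fun u => u < w) = E.filter fun u => u < w := by
    rw [Finset.filter_erase, Finset.erase_eq_of_notMem]
    simp only [Finset.mem_filter]
    rintro ⟨-, hlt⟩
    exact absurd (hlt.trans hvw) (lt_irrefl v)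
  have h2 : ((E.erase w).filter fun u => u < v) = (E.filter fun u => u < v).erase w := by
    rw [Finset.filter_erase]
  have hwmem : w ∈ E.filter fun u => u < v := Finset.mem_filter.2 ⟨hw, hvw⟩
  set a := (E.filter fun u => u < v).card with ha
  set b := (E.filter fun u => u < w).card with hb
  have h3 : ((E.filter fun u => u < v).erase w).card = a - 1 :=
    by rw [Finset.card_erase_of_mem hwmem]
  have hapos : 1 ≤ a := Finset.card_pos.2 ⟨w, hwmem⟩
  obtain ⟨k, hk⟩ : ∃ k, a = k + 1 := ⟨a - 1, by omega⟩
  rw [h1, h2, h3, hk]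
  have : k + 1 - 1 = k := by omega
  rw [this, pow_succ]
  ring

end Aux

section Aux2
open Finset
variable {R : Type} [CommRing R] {S : Finset (Finset V)}
open scoped Classical

lemma sum_inc_inc (hS : IsComplex S) {E G : Finset V} (hE : E ∈ S) {n : ℕ}
    (hEc : E.card = n + 3) (hG : G.card = n + 1) :
    ∑ F ∈ S.filter (fun F => F.card = n + 2), inc R F G * inc R E F = 0 := by
  have hstep : ∀ F ∈ S.filter (fun F => F.card = n + 2),
      inc R F G * inc R E F =
      ∑ v ∈ E, if F = E.erase v then
        inc R F G * (-1 : R) ^ ((E.filter fun u => u < v).card) else 0 := by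
    intro F _
    nth_rewrite 2 [inc]
    rw [Finset.mul_sum]
    exact Finset.sum_congr rfl fun v _ => by split <;> simp
  rw [Finset.sum_congr rfl hstep, Finset.sum_comm]
  -- inner sums pick out F = E.erase v
  have herase_mem : ∀ v ∈ E, E.erase v ∈ S.filter (fun F => F.card = n + 2) := by
    intro v hv
    refine Finset.mem_filter.2 ⟨(hS E hE).2 _ (Finset.erase_subset v E) ?_, ?_⟩
    · rw [← Finset.card_pos, Finset.card_erase_of_mem hv, hEc]; omega
    · rw [Finset.card_erase_of_mem hv, hEc]; omega
  have hpick : ∀ v ∈ E,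
      (∑ F ∈ S.filter (fun F => F.card = n + 2), if F = E.erase v then
        inc R F G * (-1 : R) ^ ((E.filter fun u => u < v).card) else 0) =
      inc R (E.erase v) G * (-1 : R) ^ ((E.filter fun u => u < v).card) := by
    intro v hv
    rw [Finset.sum_ite_eq' (S.filter (fun F => F.card = n + 2)) (E.erase v)
      (fun F => inc R F G * (-1 : R) ^ ((E.filter fun u => u < v).card)),
      if_pos (herase_mem v hv)]
  rw [Finset.sum_congr rfl hpick]
  -- expand the remaining `inc`
  have hexp : ∀ v ∈ E,
      inc R (E.erase v) G * (-1 : R) ^ ((E.filter fun u => u < v).card) =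
      ∑ w ∈ E, (if G = (E.erase v).erase w then
          (-1 : R) ^ (((E.erase v).filter fun u => u < w).card) else 0) *
        (-1 : R) ^ ((E.filter fun u => u < v).card) := by
    intro v hv
    rw [inc, Finset.sum_mul]
    rw [Finset.sum_erase E]
    rw [if_neg, zero_mul]
    intro h
    have : G.card = (E.erase v).card := by
      rw [h, Finset.erase_idem]
    rw [hG, Finset.card_erase_of_mem hv, hEc] at this
    omega
  rw [Finset.sum_congr rfl hexp, ← Finset.sum_product']
  -- now cancel in pairs by the involution (v, w) ↦ (w, v)
  refine Finset.sum_involution (fun q _ => (q.2, q.1)) ?_ ?_ ?_ ?_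
  · rintro ⟨v, w⟩ hq
    obtain ⟨hv, hw⟩ := Finset.mem_product.1 hq
    dsimp only
    rw [show (E.erase w).erase v = (E.erase v).erase w from Finset.erase_right_comm]
    by_cases hcond : G = (E.erase v).erase w
    · rw [if_pos hcond, if_pos hcond]
      rcases lt_trichotomy v w with hlt | rfl | hlt
      · rw [add_comm]
        exact sign_cancel hw hv hlt
      · exfalso
        have hcc : G.card = ((E.erase v).erase v).card := by rw [hcond]
        rw [Finset.erase_idem, hG, Finset.card_erase_of_mem hv, hEc] at hcc
        omega
      · exact sign_cancel hv hw hlt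
    · rw [if_neg hcond, if_neg hcond, zero_mul, zero_mul, add_zero]
  · rintro ⟨v, w⟩ hq hne h
    apply hne
    obtain ⟨hv, hw⟩ := Finset.mem_product.1 hq
    have hvw : w = v := congrArg Prod.fst h
    subst hvw
    dsimp only
    rw [if_neg, zero_mul]
    intro hcond
    have hcc : G.card = ((E.erase w).erase w).card := by rw [hcond]
    rw [Finset.erase_idem, hG, Finset.card_erase_of_mem hv, hEc] at hcc
    omega
  · rintro ⟨v, w⟩ hq
    exact Finset.mem_product.2 ⟨(Finset.mem_product.1 hq).2, (Finset.mem_product.1 hq).1⟩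
  · rintro ⟨v, w⟩ hq
    rfl

lemma bdry_bdry (hS : IsComplex S) (n : ℕ) :
    (bdry R S n).comp (bdry R S (n + 1)) = 0 := by
  apply LinearMap.ext
  intro c
  simp only [LinearMap.comp_apply, LinearMap.zero_apply]
  funext G
  show ∑ F ∈ (S.filter fun F => F.card = n + 2).attach,
      inc R F.val G.val * (bdry R S (n + 1) c)
        ⟨F.val, (Finset.mem_filter.mp F.prop).1, (Finset.mem_filter.mp F.prop).2⟩ = 0
  have expand : ∀ (F : {x // x ∈ S.filter fun F => F.card = n + 2}),
      (bdry R S (n + 1) c) ⟨F.val, (Finset.mem_filter.mp F.prop).1,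
          (Finset.mem_filter.mp F.prop).2⟩
      = ∑ E ∈ (S.filter fun F => F.card = n + 1 + 2).attach, inc R E.val F.val *
          c ⟨E.val, (Finset.mem_filter.mp E.prop).1, (Finset.mem_filter.mp E.prop).2⟩ :=
    fun F => rfl
  rw [Finset.sum_congr rfl (fun F _ => by rw [expand F, Finset.mul_sum])]
  rw [Finset.sum_comm]
  apply Finset.sum_eq_zero
  intro E _
  have key : ∑ F ∈ (S.filter fun F => F.card = n + 2).attach,
      inc R F.val G.val * inc R E.val F.val = 0 := by
    rw [Finset.sum_attach (S.filter fun F => F.card = n + 2)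
      (fun F => inc R F G.val * inc R E.val F)]
    have hE := Finset.mem_filter.1 E.prop
    exact sum_inc_inc hS hE.1 (by omega : E.val.card = n + 3) G.prop.2
  have factor : ∑ F ∈ (S.filter fun F => F.card = n + 2).attach,
      inc R F.val G.val * (inc R E.val F.val *
        c ⟨E.val, (Finset.mem_filter.mp E.prop).1, (Finset.mem_filter.mp E.prop).2⟩)
      = (∑ F ∈ (S.filter fun F => F.card = n + 2).attach,
          inc R F.val G.val * inc R E.val F.val) *
        c ⟨E.val, (Finset.mem_filter.mp E.prop).1, (Finset.mem_filter.mp E.prop).2⟩ := by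
    rw [Finset.sum_mul]
    exact Finset.sum_congr rfl fun _ _ => (mul_assoc _ _ _).symm
  rw [factor, key, zero_mul]

end Aux2

section Aux3
open Finset

instance cellFintype (S : Finset (Finset V)) (k : ℕ) :
    Fintype {F : Finset V // F ∈ S ∧ F.card = k + 1} :=
  Fintype.subtype (S.filter fun F => F.card = k + 1) (fun x => by simp)

lemma card_cells (S : Finset (Finset V)) (k : ℕ) :
    Fintype.card {F : Finset V // F ∈ S ∧ F.card = k + 1} =
      (S.filter fun F => F.card = k + 1).card :=
  Fintype.card_of_subtype _ (fun x => by simp)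

lemma rank_ge (Fld : Type) [Field Fld] (S : Finset (Finset V)) (mm : MorseMatching S)
    (n : ℕ) :
    (mm.M.filter fun p => p.1.card = n + 1).card ≤
      Module.finrank Fld ↥(LinearMap.range (bdry Fld S n)) := by
  classical
  set P := mm.M.filter fun p => p.1.card = n + 1 with hP
  have hPmem : ∀ p ∈ P, p ∈ mm.M ∧ p.1.card = n + 1 := fun p hp => Finset.mem_filter.1 hp
  have hσ : ∀ p : {x // x ∈ P}, p.1.1 ∈ S ∧ p.1.1.card = n + 1 := fun p =>
    ⟨mm.mem_left _ (hPmem _ p.2).1, (hPmem _ p.2).2⟩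
  have hτ : ∀ p : {x // x ∈ P}, p.1.2 ∈ S ∧ p.1.2.card = n + 1 + 1 := fun p =>
    ⟨mm.mem_right _ (hPmem _ p.2).1, by
      rw [(mm.cover _ (hPmem _ p.2).1).2, (hPmem _ p.2).2]⟩
  let ι : ({x // x ∈ P} → Fld) →ₗ[Fld] Chains Fld S (n + 1) :=
    { toFun := fun x F => ∑ p ∈ P.attach, if F.1 = p.1.2 then x p else 0
      map_add' := by
        intro x y; funext F
        show _ = (fun F => ∑ p ∈ P.attach, if F.1 = p.1.2 then x p else 0) F +
          (fun F => ∑ p ∈ P.attach, if F.1 = p.1.2 then y p else 0) F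
        rw [← Finset.sum_add_distrib]
        exact Finset.sum_congr rfl fun p _ => by split <;> simp
      map_smul' := by
        intro r x; funext F
        rw [RingHom.id_apply]
        show _ = r * _
        rw [Finset.mul_sum]
        exact Finset.sum_congr rfl fun p _ => by split <;> simp }
  let π : Chains Fld S n →ₗ[Fld] ({x // x ∈ P} → Fld) :=
    LinearMap.pi fun p => LinearMap.proj ⟨p.1.1, hσ p⟩
  set D := bdry Fld S n with hD
  set ψ := (π.comp D).comp ι with hψdef
  have hψ : ∀ x p, ψ x p = ∑ q ∈ P.attach, inc Fld q.1.2 p.1.1 * x q := by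
    intro x p
    show ∑ F ∈ (S.filter fun F => F.card = n + 2).attach,
        inc Fld F.1 p.1.1 * (∑ q ∈ P.attach, if F.1 = q.1.2 then x q else 0) = _
    have h1 : ∀ F : {x // x ∈ S.filter fun F => F.card = n + 2},
        inc Fld F.1 p.1.1 * (∑ q ∈ P.attach, if F.1 = q.1.2 then x q else 0)
        = ∑ q ∈ P.attach, (if F.1 = q.1.2 then inc Fld F.1 p.1.1 * x q else 0) := by
      intro F
      rw [Finset.mul_sum]
      exact Finset.sum_congr rfl fun q _ => by split <;> simp
    rw [Finset.sum_congr rfl (fun F _ => h1 F), Finset.sum_comm]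
    apply Finset.sum_congr rfl
    intro q _
    rw [Finset.sum_attach (S.filter fun F => F.card = n + 2)
      (fun F => if F = q.1.2 then inc Fld F p.1.1 * x q else 0)]
    rw [Finset.sum_ite_eq' (S.filter fun F => F.card = n + 2) q.1.2
      (fun F => inc Fld F p.1.1 * x q), if_pos]
    exact Finset.mem_filter.2 ⟨(hτ q).1, (hτ q).2⟩
  -- the triangularity relation coming from acyclicity
  let r : {x // x ∈ P} → {x // x ∈ P} → Prop := fun q p => q ≠ p ∧ inc Fld q.1.2 p.1.1 ≠ 0
  have hr : ∀ q p, r q p → Relation.TransGen (fun x y => (x, y) ∈ mm.M ∨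
      ((y, x) ∉ mm.M ∧ y ⊂ x ∧ x.card = y.card + 1 ∧ x ∈ S ∧ y ∈ S)) q.1.2 p.1.2 := by
    rintro q p ⟨hne, hinc⟩
    obtain ⟨v, hv, hve⟩ := exists_of_inc_ne_zero hinc
    have hsub : p.1.1 ⊂ q.1.2 := hve ▸ Finset.erase_ssubset hv
    have hcard : q.1.2.card = p.1.1.card + 1 := by
      rw [hve, Finset.card_erase_of_mem hv]
      have := Finset.card_pos.2 ⟨v, hv⟩
      omega
    have hnotM : (p.1.1, q.1.2) ∉ mm.M := by
      intro hmem
      by_cases heq : (p.1.1, q.1.2) = p.1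
      · have h2 : q.1.2 = p.1.2 := by rw [← heq]
        exact (mm.matching _ (hPmem _ q.2).1 _ (hPmem _ p.2).1
          (fun h => hne (Subtype.ext h))).2.1 h2
      · exact (mm.matching _ hmem _ (hPmem _ p.2).1 heq).1 rfl
    refine Relation.TransGen.head (Or.inr ⟨hnotM, hsub, hcard, (hτ q).1, (hσ p).1⟩) ?_
    refine Relation.TransGen.single (Or.inl ?_)
    exact (hPmem _ p.2).1
  have hirr : ∀ p, ¬ Relation.TransGen r p p := by
    intro p hp
    exact mm.acyclic p.1.2 (Relation.TransGen.lift' (fun q : {x // x ∈ P} => q.1.2) hr p p hp)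
  haveI : IsTrans {x // x ∈ P} (Relation.TransGen r) := ⟨fun _ _ _ => Relation.TransGen.trans⟩
  haveI : IsIrrefl {x // x ∈ P} (Relation.TransGen r) := ⟨hirr⟩
  have hwf : WellFounded r := Subrelation.wf (fun {x y} h => Relation.TransGen.single h)
    (Finite.wellFounded_of_trans_of_irrefl (Relation.TransGen r))
  have hdiag : ∀ p : {x // x ∈ P}, inc Fld p.1.2 p.1.1 ≠ 0 := by
    intro p
    obtain ⟨v, hv, -, hve⟩ := eq_erase_of_ssubset_card (mm.cover _ (hPmem _ p.2).1).1
      (mm.cover _ (hPmem _ p.2).1).2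
    rw [hve, inc_erase hv]
    exact pow_ne_zero _ (neg_ne_zero.2 one_ne_zero)
  have hinj : Function.Injective ψ := by
    apply LinearMap.ker_eq_bot.1
    apply LinearMap.ker_eq_bot'.2
    intro x hx
    have hall : ∀ p, x p = 0 := by
      intro p
      refine hwf.induction (C := fun p => x p = 0) p ?_
      intro p IH
      have h0 : ψ x p = 0 := by rw [hx]; rfl
      rw [hψ x p, Finset.sum_eq_single p] at h0
      · exact (mul_eq_zero.1 h0).resolve_left (hdiag p)
      · intro q _ hqp
        by_cases hz : inc Fld q.1.2 p.1.1 = 0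
        · rw [hz, zero_mul]
        · rw [IH q ⟨hqp, hz⟩, mul_zero]
      · intro hp; exact absurd (Finset.mem_attach _ _) hp
    exact funext hall
  have hcomp_inj : Function.Injective (D.comp ι) := by
    intro a b hab
    apply hinj
    show π ((D.comp ι) a) = π ((D.comp ι) b)
    rw [hab]
  have h1 : Module.finrank Fld ↥(LinearMap.range (D.comp ι)) =
      Fintype.card {x // x ∈ P} := by
    rw [LinearMap.finrank_range_of_inj hcomp_inj, Module.finrank_fintype_fun_eq_card]
  calc P.card = Fintype.card {x // x ∈ P} := (Fintype.card_coe P).symm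
    _ = Module.finrank Fld ↥(LinearMap.range (D.comp ι)) := h1.symm
    _ ≤ Module.finrank Fld ↥(LinearMap.range D) :=
        Submodule.finrank_mono (LinearMap.range_comp_le_range ι D)

end Aux3

section Aux4
open Finset
variable {S : Finset (Finset V)}

lemma finrank_chains (Fld : Type) [Field Fld] (S : Finset (Finset V)) (k : ℕ) :
    Module.finrank Fld (Chains Fld S k) = (S.filter fun F => F.card = k + 1).card := by
  rw [Module.finrank_fintype_fun_eq_card, card_cells]

lemma b_zero (hS : IsComplex S) (mm : MorseMatching S) :
    (mm.M.filter fun p => p.2.card = 0 + 1).card = 0 := by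
  rw [Finset.card_eq_zero, Finset.filter_eq_empty_iff]
  intro p hp
  have h1 : 1 ≤ p.1.card := Finset.card_pos.2 (hS _ (mm.mem_left _ hp)).1
  have h2 := (mm.cover _ hp).2
  omega

lemma ab_bridge (mm : MorseMatching S) (i : ℕ) :
    (mm.M.filter fun p => p.1.card = i + 1).card =
      (mm.M.filter fun p => p.2.card = i + 1 + 1).card := by
  congr 1
  apply Finset.filter_congr
  intro p hp
  have h2 := (mm.cover _ hp).2
  omega

lemma count_split (S : Finset (Finset V)) (mm : MorseMatching S) (i : ℕ) :
    (S.filter fun F => F.card = i + 1).card =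
      mm.critCount i + (mm.M.filter fun p => p.1.card = i + 1).card
        + (mm.M.filter fun p => p.2.card = i + 1).card := by
  classical
  set A := (mm.M.filter fun p => p.1.card = i + 1).image Prod.fst with hA
  set B := (mm.M.filter fun p => p.2.card = i + 1).image Prod.snd with hB
  set C := mm.criticalCells.filter fun F => F.card = i + 1 with hC
  have hmemA : ∀ x, x ∈ A ↔ ∃ p ∈ mm.M, p.1.card = i + 1 ∧ p.1 = x := by
    intro x
    simp only [hA, Finset.mem_image, Finset.mem_filter]
    constructor
    · rintro ⟨p, ⟨hp, hc⟩, rfl⟩; exact ⟨p, hp, hc, rfl⟩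
    · rintro ⟨p, hp, hc, rfl⟩; exact ⟨p, ⟨hp, hc⟩, rfl⟩
  have hmemB : ∀ x, x ∈ B ↔ ∃ p ∈ mm.M, p.2.card = i + 1 ∧ p.2 = x := by
    intro x
    simp only [hB, Finset.mem_image, Finset.mem_filter]
    constructor
    · rintro ⟨p, ⟨hp, hc⟩, rfl⟩; exact ⟨p, hp, hc, rfl⟩
    · rintro ⟨p, hp, hc, rfl⟩; exact ⟨p, ⟨hp, hc⟩, rfl⟩
  have hmemC : ∀ x, x ∈ C ↔ (x ∈ S ∧ ∀ p ∈ mm.M, p.1 ≠ x ∧ p.2 ≠ x) ∧ x.card = i + 1 := by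
    intro x
    simp only [hC, MorseMatching.criticalCells, Finset.mem_filter]
  have hset : S.filter (fun F => F.card = i + 1) = C ∪ A ∪ B := by
    ext x
    simp only [Finset.mem_union, Finset.mem_filter, hmemA, hmemB, hmemC]
    constructor
    · rintro ⟨hxS, hxc⟩
      by_cases hcrit : ∀ p ∈ mm.M, p.1 ≠ x ∧ p.2 ≠ x
      · exact Or.inl (Or.inl ⟨⟨hxS, hcrit⟩, hxc⟩)
      · push_neg at hcrit
        obtain ⟨p, hp, hpx⟩ := hcrit
        by_cases h1 : p.1 = x
        · exact Or.inl (Or.inr ⟨p, hp, h1 ▸ hxc, h1⟩)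
        · have h2 : p.2 = x := by tauto
          exact Or.inr ⟨p, hp, h2 ▸ hxc, h2⟩
    · rintro ((⟨⟨hxS, -⟩, hxc⟩ | ⟨p, hp, hc, rfl⟩) | ⟨p, hp, hc, rfl⟩)
      · exact ⟨hxS, hxc⟩
      · exact ⟨mm.mem_left _ hp, hc⟩
      · exact ⟨mm.mem_right _ hp, hc⟩
  have hCA : Disjoint C A := by
    rw [Finset.disjoint_left]
    intro x hxC hxA
    obtain ⟨p, hp, -, hpx⟩ := (hmemA x).1 hxA
    exact ((hmemC x).1 hxC).1.2 p hp |>.1 hpx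
  have hCB : Disjoint C B := by
    rw [Finset.disjoint_left]
    intro x hxC hxB
    obtain ⟨p, hp, -, hpx⟩ := (hmemB x).1 hxB
    exact ((hmemC x).1 hxC).1.2 p hp |>.2 hpx
  have hAB : Disjoint A B := by
    rw [Finset.disjoint_left]
    intro x hxA hxB
    obtain ⟨p, hp, -, hpx⟩ := (hmemA x).1 hxA
    obtain ⟨q, hq, -, hqx⟩ := (hmemB x).1 hxB
    by_cases hpq : p = q
    · subst hpq
      have hss := (mm.cover _ hp).1
      rw [hpx.trans hqx.symm] at hss
      exact (Finset.ssubset_iff_of_subset (le_refl _)).1 hss |>.elim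
        (fun v hv => hv.2 hv.1)
    · exact (mm.matching _ hp _ hq hpq).2.2.1 (hpx.trans hqx.symm)
  have hinjA : Set.InjOn (Prod.fst : Finset V × Finset V → Finset V) ((mm.M.filter fun p => p.1.card = i + 1) ) := by
    intro p hp q hq h
    by_contra hne
    exact (mm.matching _ (Finset.mem_filter.1 hp).1 _ (Finset.mem_filter.1 hq).1 hne).1 h
  have hinjB : Set.InjOn (Prod.snd : Finset V × Finset V → Finset V) ((mm.M.filter fun p => p.2.card = i + 1) ) := by
    intro p hp q hq h
    by_contra hne
    exact (mm.matching _ (Finset.mem_filter.1 hp).1 _ (Finset.mem_filter.1 hq).1 hne).2.1 h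
  have hcc : C.card = mm.critCount i := rfl
  rw [hset, Finset.card_union_of_disjoint (Finset.disjoint_union_left.2 ⟨hCB, hAB⟩),
    Finset.card_union_of_disjoint hCA, hcc,
    Finset.card_image_of_injOn hinjA, Finset.card_image_of_injOn hinjB]

end Aux4

/-- the discrete Morse inequalities `β_i(K; F) ≤ c_i`
over any field `F`. -/
theorem stmt7 (Fld : Type) [Field Fld] (S : Finset (Finset V)) (hS : IsComplex S)
    (mm : MorseMatching S) (i : ℕ) :
    betti Fld S i ≤ mm.critCount i := by
  classical
  cases i with
  | zero =>
    have hb : betti Fld S 0 =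
        Module.finrank Fld (Chains Fld S 0 ⧸ LinearMap.range (bdry Fld S 0)) := rfl
    have hq := Submodule.finrank_quotient_add_finrank (LinearMap.range (bdry Fld S 0))
    have hr := rank_ge Fld S mm 0
    have hcount := count_split S mm 0
    have hz := b_zero hS mm
    have hchain := finrank_chains Fld S 0
    omega
  | succ n =>
    set K := LinearMap.ker (bdry Fld S n) with hK
    set N := Submodule.comap K.subtype (LinearMap.range (bdry Fld S (n + 1))) with hNdef
    have hb : betti Fld S (n + 1) = Module.finrank Fld (K ⧸ N) := rfl
    have hle : LinearMap.range (bdry Fld S (n + 1)) ≤ K :=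
      LinearMap.range_le_ker_iff.2 (bdry_bdry hS n)
    have hN : Module.finrank Fld N =
        Module.finrank Fld (LinearMap.range (bdry Fld S (n + 1))) :=
      LinearEquiv.finrank_eq (Submodule.comapSubtypeEquivOfLe hle)
    have hq := Submodule.finrank_quotient_add_finrank N
    have hrn := LinearMap.finrank_range_add_finrank_ker (bdry Fld S n)
    rw [← hK] at hrn
    have hr1 := rank_ge Fld S mm n
    have hr2 := rank_ge Fld S mm (n + 1)
    have hbridge := ab_bridge mm n
    have hcount := count_split S mm (n + 1)
    have hchain := finrank_chains Fld S (n + 1)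
    omega
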